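/- Ward's elliptic divisibility recurrence τ_{n+2}τ_{n-2} = τ_2² τ_{n+1}τ_{n-1} − τ_1 τ_3 τ_n² with τ_0 = 0, τ_1 = 1, integer values τ_2, τ_3, τ_4 satisfying τ_2 ≠ 0 and τ_2 | τ_4, extended by τ_{−n} = −τ_n, produces an integer sequence at least up to τ_8; that is, τ_5, τ_6, τ_7, τ_8 ∈ ℤ. -/

import Mathlib

/-- Ward's elliptic divisibility recurrence produces integers at least up to τ₈. -/
theorem ward_integrality (τ2 τ3 τ4 : ℤ) (h2 : τ2 ≠ 0) (h3 : τ3 ≠ 0) (h4 : τ4 ≠ 0)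
    (hdvd : τ2 ∣ τ4)
    (t5 t6 t7 t8 : ℚ)
    (ht5 : t5 = ((τ2 : ℚ) ^ 2 * τ4 * τ2 - τ3 * τ3 ^ 2) / 1)
    (ht6 : t6 = ((τ2 : ℚ) ^ 2 * t5 * τ3 - τ3 * τ4 ^ 2) / τ2)
    (ht7 : t7 = ((τ2 : ℚ) ^ 2 * t6 * τ4 - τ3 * t5 ^ 2) / τ3)
    (ht8 : t8 = ((τ2 : ℚ) ^ 2 * t7 * t5 - τ3 * t6 ^ 2) / τ4) :
    (∃ z : ℤ, t5 = (z : ℚ)) ∧ (∃ z : ℤ, t6 = (z : ℚ)) ∧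
      (∃ z : ℤ, t7 = (z : ℚ)) ∧ (∃ z : ℤ, t8 = (z : ℚ)) := by
  obtain ⟨k, hk⟩ := hdvd
  subst hk
  have h2q : (τ2 : ℚ) ≠ 0 := Int.cast_ne_zero.mpr h2
  have h3q : (τ3 : ℚ) ≠ 0 := Int.cast_ne_zero.mpr h3
  have hkq : (k : ℚ) ≠ 0 := by
    intro h
    apply h4
    rw [show k = 0 from Int.cast_injective (h.trans (Int.cast_zero).symm)]
    ring
  subst ht5 ht6 ht7 ht8
  refine ⟨⟨τ2 ^ 4 * k - τ3 ^ 3, ?_⟩,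
    ⟨τ2 * τ3 * (τ2 ^ 4 * k - τ3 ^ 3 - k ^ 2), ?_⟩,
    ⟨τ2 ^ 4 * k * τ3 ^ 3 - τ2 ^ 4 * k * k ^ 2 - τ3 ^ 6, ?_⟩,
    ⟨-τ2 ^ 9 * k ^ 3 + 3 * τ2 ^ 5 * τ3 ^ 3 * k ^ 2 - τ2 * τ3 ^ 3 * k ^ 3
      - 2 * τ2 * τ3 ^ 6 * k, ?_⟩⟩ <;>
  · push_cast
    field_simp
    all_goals ring
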